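/- arXiv:1210.2110 — 3 statements merged into one kernel-verified Lean document; each statement's English description precedes it below -/
import Mathlib

section
/- Let (Ω, V) be an affine resolvable (θ, ρ, α, λ)-BIBD (a resolvable BIBD with n = θ + ρ − 1 blocks) and set β = α²/θ. Let P¹ and P² be two distinct parallel classes of the resolution and let B be a block in P¹. Then P² contains exactly θ/α blocks, |B ∩ C| = β for every block C ∈ P², and B is the union over C ∈ P² of the sets B ∩ C; in particular B is β-recoverable from P². -/
open Finset

theorem key_id (m a l r : ℤ) (hB : (m-1)*r = m*a-1)
    (hC : l*(m*a-1) = r*(a-1)) (hr : r ≠ 0) :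
    m^2*(a*(a-1)*(l-1)+a*(r-1)) - 2*m*a*(a*(r-1)) + a^2*((r-1)*m) = 0 := by
  rcases eq_or_ne m 1 with hm | hm
  · subst hm
    have ha : a = 1 := by linarith
    subst ha; ring
  · have h2 : l*(m-1) = a - 1 := by
      have h : l * ((m-1)*r) = (a-1) * r := by rw [hB]; linarith [hC]
      exact mul_right_cancel₀ hr (by linarith : (l*(m-1)) * r = (a-1)*r)
    have ha : a = l*(m-1) + 1 := by linarith
    subst ha
    have h3 : (m-1) * r = (m-1) * (l*m+1) := by ring_nf; ring_nf at hB; linarith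
    have hr' : r = l*m+1 := mul_left_cancel₀ (sub_ne_zero.mpr hm) h3
    subst hr'
    ring

/-- In an affine resolvable `(θ, ρ, α, λ)`-BIBD, with `β = α²/θ`: for two distinct
parallel classes `c₁ ≠ c₂` and a block `V i` in class `c₁`, the class `c₂` contains
exactly `θ/α` blocks, `|V i ∩ V j| = β` for every block `V j` of class `c₂`, and
`V i` is the union of the sets `V i ∩ V j` over blocks `V j` of class `c₂`;
in particular `V i` is `β`-recoverable from the class `c₂`. -/
theorem affine_resolvable_beta_recoverable {Ω : Type*} [Fintype Ω] [DecidableEq Ω]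
    (θ n α ρ lam β : ℕ)
    (hθ : Fintype.card Ω = θ)
    (V : Fin n → Finset Ω)
    (hα : ∀ i, (V i).card = α)
    (hρ : ∀ x : Ω, (Finset.univ.filter fun i => x ∈ V i).card = ρ)
    (hlam : ∀ x y : Ω, x ≠ y →
      (Finset.univ.filter fun i => x ∈ V i ∧ y ∈ V i).card = lam)
    (cls : Fin n → Fin ρ)
    (hdisj : ∀ i j, i ≠ j → cls i = cls j → Disjoint (V i) (V j))
    (hcover : ∀ (c : Fin ρ) (x : Ω), ∃ i, cls i = c ∧ x ∈ V i)
    (haffine : n = θ + ρ - 1)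
    (hβ : β = α ^ 2 / θ)
    (c₁ c₂ : Fin ρ) (hc : c₁ ≠ c₂)
    (i : Fin n) (hi : cls i = c₁) :
    (Finset.univ.filter fun j => cls j = c₂).card * α = θ ∧
    (∀ j, cls j = c₂ → (V i ∩ V j).card = β) ∧
    V i = (Finset.univ.filter fun j => cls j = c₂).biUnion (fun j => V i ∩ V j) := by
  -- class sizes
  have P1 : ∀ c : Fin ρ, (univ.filter fun j => cls j = c).card * α = θ := by
    intro c
    have hcup : (univ.filter fun j => cls j = c).biUnion V = univ := by
      apply eq_univ_of_forall
      intro x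
      obtain ⟨j, hj, hxj⟩ := hcover c x
      exact mem_biUnion.2 ⟨j, mem_filter.2 ⟨mem_univ _, hj⟩, hxj⟩
    have hdisj' : ∀ j ∈ (univ.filter fun j => cls j = c),
        ∀ k ∈ (univ.filter fun j => cls j = c), j ≠ k → Disjoint (V j) (V k) := by
      intro j hj k hk hjk
      exact hdisj j k hjk ((mem_filter.1 hj).2.trans (mem_filter.1 hk).2.symm)
    have := card_biUnion hdisj'
    rw [hcup, card_univ, hθ] at this
    have hs : ∑ u ∈ filter (fun j => cls j = c) univ, (V u).card
        = (univ.filter fun j => cls j = c).card * α := by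
      rw [sum_congr rfl fun j _ => hα j, sum_const, smul_eq_mul]
    exact (this.trans hs).symm
  -- third conclusion
  have third : V i = (univ.filter fun j => cls j = c₂).biUnion (fun j => V i ∩ V j) := by
    apply Finset.Subset.antisymm
    · intro x hx
      obtain ⟨j, hj, hxj⟩ := hcover c₂ x
      exact mem_biUnion.2 ⟨j, mem_filter.2 ⟨mem_univ _, hj⟩, mem_inter.2 ⟨hx, hxj⟩⟩
    · exact biUnion_subset.2 fun j _ => inter_subset_left
  refine ⟨P1 c₂, ?_, third⟩
  -- degenerate case
  rcases Nat.eq_zero_or_pos θ with hθ0 | hθpos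
  · intro j hj
    have hΩ : IsEmpty Ω := Fintype.card_eq_zero_iff.1 (hθ.trans hθ0)
    have : V i ∩ V j = ∅ := eq_empty_of_forall_notMem fun x _ => (hΩ.false x).elim
    have hα0 : α = 0 := by
      rw [← hα i]
      exact card_eq_zero.2 (eq_empty_of_forall_notMem fun x _ => (hΩ.false x).elim)
    simp [this, hβ, hα0, hθ0]
  -- main case : θ > 0
  have ρpos : 0 < ρ := c₁.pos
  have αpos : 0 < α := by
    rcases Nat.eq_zero_or_pos α with h | h
    · exfalso; have h2 := P1 c₁; rw [h, mul_zero] at h2; omega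
    · exact h
  set mc := (univ.filter fun j => cls j = c₁).card with hmc
  have hmcα : mc * α = θ := P1 c₁
  have mcpos : 0 < mc := by
    rcases Nat.eq_zero_or_pos mc with h | h
    · exfalso; rw [h, zero_mul] at hmcα; omega
    · exact h
  have hmeq : ∀ c, (univ.filter fun j => cls j = c).card = mc := fun c =>
    Nat.eq_of_mul_eq_mul_right αpos ((P1 c).trans hmcα.symm)
  -- total number of blocks
  have hn : n = ρ * mc := by
    have h1 := Finset.card_eq_sum_card_fiberwise
      (f := cls) (s := (univ : Finset (Fin n))) (t := univ) (fun x _ => mem_univ _)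
    rw [card_univ, Fintype.card_fin] at h1
    rw [h1, sum_congr rfl fun c _ => hmeq c, sum_const, smul_eq_mul, card_univ,
      Fintype.card_fin]
  set T := univ.filter fun j => ¬ cls j = c₁ with hTdef
  have hTcard : mc + T.card = n := by
    have := Finset.card_filter_add_card_filter_not
      (s := (univ : Finset (Fin n))) (p := fun j => cls j = c₁)
    rw [card_univ, Fintype.card_fin] at this
    exact this
  -- uniqueness of the block of class c₁ through a point of V i
  have huniq : ∀ x, x ∈ V i → ∀ j, cls j = c₁ → x ∈ V j → j = i := by
    intro x hx j hj hxj
    by_contra hne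
    exact Finset.disjoint_left.1 (hdisj j i hne (by rw [hj, hi])) hxj hx
  -- point counts
  have hpt : ∀ x ∈ V i, (T.filter fun j => x ∈ V j).card + 1 = ρ := by
    intro x hx
    have hsing : ((univ.filter fun j => x ∈ V j).filter fun j => cls j = c₁) = {i} := by
      ext j
      simp only [mem_filter, mem_univ, true_and, mem_singleton]
      constructor
      · rintro ⟨hxj, hj⟩; exact huniq x hx j hj hxj
      · rintro rfl; exact ⟨hx, hi⟩
    have hsplit := Finset.card_filter_add_card_filter_not
      (s := univ.filter fun j => x ∈ V j) (p := fun j => cls j = c₁)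
    rw [hsing, card_singleton, hρ x] at hsplit
    have heq : (T.filter fun j => x ∈ V j)
        = ((univ.filter fun j => x ∈ V j).filter fun j => ¬ cls j = c₁) := by
      rw [hTdef, filter_filter, filter_filter]
      exact filter_congr fun j _ => by tauto
    rw [heq]
    omega
  -- pair counts
  have hpair : ∀ x ∈ V i, ∀ y ∈ V i, x ≠ y →
      (T.filter fun j => x ∈ V j ∧ y ∈ V j).card + 1 = lam := by
    intro x hx y hy hxy
    have hsing : ((univ.filter fun j => x ∈ V j ∧ y ∈ V j).filter fun j => cls j = c₁)
        = {i} := by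
      ext j
      simp only [mem_filter, mem_univ, true_and, mem_singleton]
      constructor
      · rintro ⟨⟨hxj, _⟩, hj⟩; exact huniq x hx j hj hxj
      · rintro rfl; exact ⟨⟨hx, hy⟩, hi⟩
    have hsplit := Finset.card_filter_add_card_filter_not
      (s := univ.filter fun j => x ∈ V j ∧ y ∈ V j) (p := fun j => cls j = c₁)
    rw [hsing, card_singleton, hlam x y hxy] at hsplit
    have heq : (T.filter fun j => x ∈ V j ∧ y ∈ V j)
        = ((univ.filter fun j => x ∈ V j ∧ y ∈ V j).filter fun j => ¬ cls j = c₁) := by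
      rw [hTdef, filter_filter, filter_filter]
      exact filter_congr fun j _ => by tauto
    rw [heq]
    omega
  -- intersection cards as sums of indicators
  have hxcard : ∀ j, (V i ∩ V j).card
      = ∑ x ∈ V i, (if x ∈ V j then 1 else 0) := by
    intro j
    rw [← Finset.filter_mem_eq_inter, Finset.card_filter]
  -- first double count
  have HS1 : ∑ j ∈ T, (V i ∩ V j).card
      = ∑ x ∈ V i, (T.filter fun j => x ∈ V j).card := by
    rw [sum_congr rfl fun j _ => hxcard j, Finset.sum_comm]
    exact sum_congr rfl fun x _ => (Finset.card_filter _ _).symm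
  -- second double count
  have booly : ∀ (P Q : Prop) [Decidable P] [Decidable Q],
      (if P then (1:ℕ) else 0) * (if Q then 1 else 0) = if P ∧ Q then 1 else 0 := by
    intro P Q _ _
    by_cases h1 : P <;> by_cases h2 : Q <;> simp [h1, h2]
  have HS2 : ∑ j ∈ T, ((V i ∩ V j).card) ^ 2
      = ∑ x ∈ V i, ∑ y ∈ V i, (T.filter fun j => x ∈ V j ∧ y ∈ V j).card := by
    have step : ∀ j, ((V i ∩ V j).card) ^ 2
        = ∑ x ∈ V i, ∑ y ∈ V i, (if x ∈ V j ∧ y ∈ V j then 1 else 0) := by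
      intro j
      rw [sq, hxcard j, Finset.sum_mul_sum]
      exact sum_congr rfl fun x _ => sum_congr rfl fun y _ => booly _ _
    rw [sum_congr rfl fun j _ => step j, Finset.sum_comm]
    refine sum_congr rfl fun x _ => ?_
    rw [Finset.sum_comm]
    exact sum_congr rfl fun y _ => (Finset.card_filter _ _).symm
  -- Fisher-type relation  ρ(α-1) = (θ-1)lam
  obtain ⟨x₀⟩ : Nonempty Ω := Fintype.card_pos_iff.1 (by rw [hθ]; exact hθpos)
  have hα1 : 1 ≤ α := αpos
  have hθ1 : 1 ≤ θ := hθpos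
  have hfisher : ρ * (α - 1) = (θ - 1) * lam := by
    have c1 : ∀ j ∈ (univ.filter fun j => x₀ ∈ V j), ((V j).erase x₀).card = α - 1 := by
      intro j hj
      rw [Finset.card_erase_of_mem (mem_filter.1 hj).2, hα j]
    have c2 : ∀ j, (V j).erase x₀ = (univ.erase x₀).filter (· ∈ V j) := by
      intro j
      ext y
      simp [Finset.mem_erase, and_comm]
    calc ρ * (α - 1)
        = ∑ j ∈ (univ.filter fun j => x₀ ∈ V j), ((V j).erase x₀).card := by
          rw [sum_congr rfl c1, sum_const, smul_eq_mul, hρ x₀]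
      _ = ∑ j ∈ (univ.filter fun j => x₀ ∈ V j),
            ∑ y ∈ univ.erase x₀, (if y ∈ V j then 1 else 0) := by
          refine sum_congr rfl fun j _ => ?_
          rw [c2 j, Finset.card_filter]
      _ = ∑ y ∈ univ.erase x₀,
            ((univ.filter fun j => x₀ ∈ V j).filter fun j => y ∈ V j).card := by
          rw [Finset.sum_comm]
          exact sum_congr rfl fun y _ => (Finset.card_filter _ _).symm
      _ = (θ - 1) * lam := by
          have c3 : ∀ y ∈ univ.erase x₀,
              ((univ.filter fun j => x₀ ∈ V j).filter fun j => y ∈ V j).card = lam := by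
            intro y hy
            rw [filter_filter]
            exact hlam x₀ y (Ne.symm (Finset.mem_erase.1 hy).1)
          rw [sum_congr rfl c3, sum_const, smul_eq_mul,
            Finset.card_erase_of_mem (mem_univ _), card_univ, hθ]
  -- integer versions
  have h2Z : (θ : ℤ) = (mc : ℤ) * α := by exact_mod_cast hmcα.symm
  have hnZ : (n : ℤ) = (ρ : ℤ) * mc := by exact_mod_cast hn
  have haffZ : (n : ℤ) + 1 = (θ : ℤ) + ρ := by
    have : n + 1 = θ + ρ := by omega
    exact_mod_cast this
  have hB : ((mc : ℤ) - 1) * ρ = (mc : ℤ) * α - 1 := by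
    linear_combination haffZ - hnZ + h2Z
  have hfZ : (ρ : ℤ) * ((α : ℤ) - 1) = ((θ : ℤ) - 1) * lam := by
    have h := hfisher
    zify [hα1, hθ1] at h
    exact h
  have hC : (lam : ℤ) * ((mc : ℤ) * α - 1) = (ρ : ℤ) * ((α : ℤ) - 1) := by
    linear_combination -hfZ - (lam : ℤ) * h2Z
  have hρZ : (ρ : ℤ) ≠ 0 := by exact_mod_cast ρpos.ne'
  -- evaluate the two sums over ℤ
  have E1 : ∑ j ∈ T, ((V i ∩ V j).card : ℤ) = (α : ℤ) * ((ρ : ℤ) - 1) := by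
    have h0 : ∀ x ∈ V i, ((T.filter fun j => x ∈ V j).card : ℤ) = (ρ : ℤ) - 1 := by
      intro x hx
      have := hpt x hx
      omega
    calc ∑ j ∈ T, ((V i ∩ V j).card : ℤ)
        = ((∑ j ∈ T, (V i ∩ V j).card : ℕ) : ℤ) := by push_cast; rfl
      _ = ((∑ x ∈ V i, (T.filter fun j => x ∈ V j).card : ℕ) : ℤ) := by rw [HS1]
      _ = ∑ x ∈ V i, ((T.filter fun j => x ∈ V j).card : ℤ) := by push_cast; rfl
      _ = ∑ x ∈ V i, ((ρ : ℤ) - 1) := sum_congr rfl h0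
      _ = (α : ℤ) * ((ρ : ℤ) - 1) := by
          rw [sum_const, nsmul_eq_mul, hα i]
  have E2 : ∑ j ∈ T, ((V i ∩ V j).card : ℤ) ^ 2
      = (α : ℤ) * (((ρ : ℤ) - 1) + ((α : ℤ) - 1) * ((lam : ℤ) - 1)) := by
    have inner : ∀ x ∈ V i,
        ∑ y ∈ V i, ((T.filter fun j => x ∈ V j ∧ y ∈ V j).card : ℤ)
          = ((ρ : ℤ) - 1) + ((α : ℤ) - 1) * ((lam : ℤ) - 1) := by
      intro x hx
      have hsplit := Finset.sum_erase_add (V i)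
        (fun y => ((T.filter fun j => x ∈ V j ∧ y ∈ V j).card : ℤ)) hx
      have hxx : ((T.filter fun j => x ∈ V j ∧ x ∈ V j).card : ℤ) = (ρ : ℤ) - 1 := by
        have he : (T.filter fun j => x ∈ V j ∧ x ∈ V j)
            = T.filter fun j => x ∈ V j := filter_congr fun j _ => by tauto
        rw [he]
        have := hpt x hx
        omega
      have hrest : ∑ y ∈ (V i).erase x,
          ((T.filter fun j => x ∈ V j ∧ y ∈ V j).card : ℤ)
            = ((α : ℤ) - 1) * ((lam : ℤ) - 1) := by
        have hy0 : ∀ y ∈ (V i).erase x,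
            ((T.filter fun j => x ∈ V j ∧ y ∈ V j).card : ℤ) = (lam : ℤ) - 1 := by
          intro y hy
          have hyV := Finset.mem_of_mem_erase hy
          have hne : x ≠ y := Ne.symm (Finset.mem_erase.1 hy).1
          have := hpair x hx y hyV hne
          omega
        rw [sum_congr rfl hy0, sum_const, nsmul_eq_mul,
          Finset.card_erase_of_mem hx, hα i, Nat.cast_sub hα1, Nat.cast_one]
      rw [← hsplit]
      rw [hxx, hrest]
      ring
    calc ∑ j ∈ T, ((V i ∩ V j).card : ℤ) ^ 2
        = ((∑ j ∈ T, ((V i ∩ V j).card) ^ 2 : ℕ) : ℤ) := by push_cast; rfl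
      _ = ((∑ x ∈ V i, ∑ y ∈ V i,
            (T.filter fun j => x ∈ V j ∧ y ∈ V j).card : ℕ) : ℤ) := by rw [HS2]
      _ = ∑ x ∈ V i, ∑ y ∈ V i,
            ((T.filter fun j => x ∈ V j ∧ y ∈ V j).card : ℤ) := by push_cast; rfl
      _ = ∑ x ∈ V i, (((ρ : ℤ) - 1) + ((α : ℤ) - 1) * ((lam : ℤ) - 1)) :=
          sum_congr rfl inner
      _ = (α : ℤ) * (((ρ : ℤ) - 1) + ((α : ℤ) - 1) * ((lam : ℤ) - 1)) := by
          rw [sum_const, nsmul_eq_mul, hα i]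
  have hTZ : ((T.card : ℤ)) = ((ρ : ℤ) - 1) * mc := by
    have hh : mc + T.card = ρ * mc := hTcard.trans hn
    have h : (mc : ℤ) + T.card = (ρ : ℤ) * mc := by exact_mod_cast hh
    linear_combination h
  -- the variance vanishes
  have hzero : ∑ j ∈ T, ((mc : ℤ) * ((V i ∩ V j).card : ℤ) - (α : ℤ)) ^ 2 = 0 := by
    have expand : ∑ j ∈ T, ((mc : ℤ) * ((V i ∩ V j).card : ℤ) - (α : ℤ)) ^ 2
        = (mc : ℤ) ^ 2 * (∑ j ∈ T, ((V i ∩ V j).card : ℤ) ^ 2)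
          - 2 * (mc : ℤ) * (α : ℤ) * (∑ j ∈ T, ((V i ∩ V j).card : ℤ))
          + (α : ℤ) ^ 2 * (T.card : ℤ) := by
      calc ∑ j ∈ T, ((mc : ℤ) * ((V i ∩ V j).card : ℤ) - (α : ℤ)) ^ 2
          = ∑ j ∈ T, ((mc : ℤ) ^ 2 * ((V i ∩ V j).card : ℤ) ^ 2
              - 2 * (mc : ℤ) * (α : ℤ) * ((V i ∩ V j).card : ℤ) + (α : ℤ) ^ 2) :=
            Finset.sum_congr rfl (fun j _ => by ring)
        _ = _ := by
            rw [Finset.sum_add_distrib, Finset.sum_sub_distrib, ← Finset.mul_sum,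
              ← Finset.mul_sum, Finset.sum_const, nsmul_eq_mul]
            ring
    rw [expand, E1, E2, hTZ]
    linear_combination key_id (mc : ℤ) (α : ℤ) (lam : ℤ) (ρ : ℤ) hB hC hρZ
  -- conclusion
  intro j hj
  have hjT : j ∈ T := mem_filter.2 ⟨mem_univ _, fun h => hc (h ▸ hj)⟩
  have hterm : ((mc : ℤ) * ((V i ∩ V j).card : ℤ) - (α : ℤ)) ^ 2 = 0 :=
    (Finset.sum_eq_zero_iff_of_nonneg (fun k _ => sq_nonneg _)).1 hzero j hjT
  have h4 : (mc : ℤ) * ((V i ∩ V j).card : ℤ) = (α : ℤ) := by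
    have := pow_eq_zero_iff (n := 2) (by norm_num) |>.1 hterm
    linarith
  have h5 : mc * (V i ∩ V j).card = α := by exact_mod_cast h4
  have h6 : α ^ 2 = (V i ∩ V j).card * θ := by
    rw [← hmcα, ← h5]; ring
  rw [hβ, h6, Nat.mul_div_cancel _ hθpos]
end

section
/- Let q = 4m − 1 be an odd prime power (so q ≡ 3 mod 4) and let D = {z² : z ∈ 𝔽_q, z ≠ 0} be the set of nonzero quadratic residues of 𝔽_q. Then |D| = 2m − 1, and for every nonzero g ∈ 𝔽_q the number of ordered pairs (d₁, d₂) ∈ D × D with d₁ − d₂ = g equals m − 1. That is, D is a (4m−1, 2m−1, m−1)-difference set in (𝔽_q, +). -/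
open Finset

lemma roots_sq {F : Type*} [Field F] [DecidableEq F] [Fintype F] {x0 : F} :
    (Finset.univ.filter fun z : F => z ^ 2 = x0 ^ 2) = {x0, -x0} := by
  ext z
  simp only [mem_filter, mem_univ, true_and, mem_insert, mem_singleton]
  constructor
  · intro h
    have : (z - x0) * (z + x0) = 0 := by linear_combination h
    rcases mul_eq_zero.mp this with h' | h'
    · left; exact sub_eq_zero.mp h'
    · right; linear_combination h'
  · rintro (rfl | rfl) <;> ring

lemma roots_sq_card {F : Type*} [Field F] [DecidableEq F] [Fintype F]
    (h2 : (2 : F) ≠ 0) {x0 : F} (hx : x0 ≠ 0) :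
    (Finset.univ.filter fun z : F => z ^ 2 = x0 ^ 2).card = 2 := by
  rw [roots_sq, card_insert_of_notMem, card_singleton]
  simp only [mem_singleton]
  intro h
  exact mul_ne_zero h2 hx (by linear_combination h)

lemma roots_nonsq {F : Type*} [Field F] [DecidableEq F] [Fintype F]
    {a : F} (ha : ¬ IsSquare a) :
    (Finset.univ.filter fun z : F => z ^ 2 = a).card = 0 := by
  rw [Finset.card_eq_zero, Finset.filter_eq_empty_iff]
  intro z _ h
  exact ha ⟨z, by rw [← h]; ring⟩

/-- Quadratic residue difference set: if `𝔽_q` is the finite field with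
`q = 4m − 1` elements (an odd prime power), then the set `D` of nonzero squares
has `|D| = 2m − 1` and every nonzero `g` can be written as `d₁ − d₂` with
`d₁, d₂ ∈ D` in exactly `m − 1` ways; i.e. `D` is a
`(4m−1, 2m−1, m−1)`-difference set in `(𝔽_q, +)`. -/
theorem quadratic_residue_difference_set {F : Type*} [Field F] [Fintype F]
    [DecidableEq F]
    (m : ℕ) (hm : 1 ≤ m) (hq : Fintype.card F = 4 * m - 1)
    (D : Finset F)
    (hD : D = (Finset.univ.filter fun z : F => z ≠ 0).image (fun z => z ^ 2)) :
    D.card = 2 * m - 1 ∧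
    ∀ g : F, g ≠ 0 →
      ((D ×ˢ D).filter fun p : F × F => p.1 - p.2 = g).card = m - 1 := by
  have hchar : ringChar F ≠ 2 := by
    intro h
    have := FiniteField.even_card_of_char_two h
    omega
  have h2 : (2 : F) ≠ 0 := Ring.two_ne_zero hchar
  have hns : ¬ IsSquare (-1 : F) := by
    rw [FiniteField.isSquare_neg_one_iff]
    intro h; apply h; omega
  -- membership in D
  have hmemD : ∀ d ∈ D, ∃ w : F, w ≠ 0 ∧ d = w ^ 2 := by
    intro d hd
    rw [hD] at hd
    obtain ⟨w, hw, rfl⟩ := mem_image.mp hd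
    exact ⟨w, (mem_filter.mp hw).2, rfl⟩
  have hDne : ∀ d ∈ D, d ≠ 0 := by
    intro d hd
    obtain ⟨w, hw, rfl⟩ := hmemD d hd
    exact pow_ne_zero 2 hw
  -- cardinality of D
  have hcardD : D.card = 2 * m - 1 := by
    have hmap : ∀ z ∈ (Finset.univ.filter fun z : F => z ≠ 0),
        (fun z : F => z ^ 2) z ∈ D := by
      intro z hz; rw [hD]; exact mem_image_of_mem _ hz
    have hfib := Finset.card_eq_sum_card_fiberwise hmap
    have hfib2 : ∀ d ∈ D,
        ((Finset.univ.filter fun z : F => z ≠ 0).filter fun z => z ^ 2 = d).card = 2 := by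
      intro d hd
      obtain ⟨w, hw, rfl⟩ := hmemD d hd
      rw [Finset.filter_filter]
      have : (Finset.univ.filter fun z : F => z ≠ 0 ∧ z ^ 2 = w ^ 2)
          = Finset.univ.filter fun z : F => z ^ 2 = w ^ 2 := by
        apply Finset.filter_congr
        intro z _
        simp only [and_iff_right_iff_imp]
        intro h hz0
        exact pow_ne_zero 2 hw (by rw [← h, hz0]; ring)
      rw [this]
      exact roots_sq_card h2 hw
    rw [Finset.sum_congr rfl hfib2, Finset.sum_const, smul_eq_mul] at hfib
    have hcard0 : (Finset.univ.filter fun z : F => z ≠ 0).card = 4 * m - 1 - 1 := by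
      rw [Finset.filter_ne', Finset.card_erase_of_mem (mem_univ 0), Finset.card_univ, hq]
    omega
  refine ⟨hcardD, ?_⟩
  intro g hg
  set S := (D ×ˢ D).filter fun p : F × F => p.1 - p.2 = g with hS
  set T := Finset.univ.filter fun p : F × F => p.1 ≠ 0 ∧ p.2 ≠ 0 ∧ p.1 ^ 2 - p.2 ^ 2 = g with hT
  set W := Finset.univ.filter fun p : F × F => p.1 * p.2 = g with hWdef
  set V := W.filter fun p : F × F => p.1 ≠ p.2 ∧ p.1 ≠ -p.2 with hVdef
  -- T.card = 4 * S.card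
  have hT4 : T.card = 4 * S.card := by
    have hmap : ∀ p ∈ T, (fun p : F × F => (p.1 ^ 2, p.2 ^ 2)) p ∈ S := by
      rintro ⟨x, y⟩ hp
      simp only [hT, mem_filter, mem_univ, true_and] at hp
      obtain ⟨hx, hy, hxy⟩ := hp
      simp only [hS, mem_filter, mem_product]
      refine ⟨⟨?_, ?_⟩, hxy⟩
      · rw [hD]; exact mem_image_of_mem _ (by simp [hx])
      · rw [hD]; exact mem_image_of_mem _ (by simp [hy])
    have hfib := Finset.card_eq_sum_card_fiberwise hmap
    have hfib4 : ∀ q ∈ S,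
        (T.filter fun p : F × F => (p.1 ^ 2, p.2 ^ 2) = q).card = 4 := by
      rintro ⟨d1, d2⟩ hq'
      simp only [hS, mem_filter, mem_product] at hq'
      obtain ⟨⟨hd1, hd2⟩, hdiff⟩ := hq'
      obtain ⟨x0, hx0, rfl⟩ := hmemD d1 hd1
      obtain ⟨y0, hy0, rfl⟩ := hmemD d2 hd2
      have : (T.filter fun p : F × F => (p.1 ^ 2, p.2 ^ 2) = (x0 ^ 2, y0 ^ 2))
          = ({x0, -x0} ×ˢ {y0, -y0} : Finset (F × F)) := by
        ext ⟨x, y⟩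
        simp only [hT, mem_filter, mem_univ, true_and, mem_product, Prod.mk.injEq,
          ← roots_sq (x0 := x0), ← roots_sq (x0 := y0), mem_filter, mem_univ, true_and]
        constructor
        · rintro ⟨_, h⟩; exact h
        · rintro ⟨h1, h2'⟩
          refine ⟨⟨?_, ?_, ?_⟩, h1, h2'⟩
          · intro h0; exact pow_ne_zero 2 hx0 (by rw [← h1, h0]; ring)
          · intro h0; exact pow_ne_zero 2 hy0 (by rw [← h2', h0]; ring)
          · rw [h1, h2']; exact hdiff
      rw [this, Finset.card_product, ← roots_sq (x0 := x0), ← roots_sq (x0 := y0),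
        roots_sq_card h2 hx0, roots_sq_card h2 hy0]
    rw [Finset.sum_congr rfl hfib4, Finset.sum_const, smul_eq_mul, mul_comm] at hfib
    exact hfib
  -- T.card = V.card
  have hTV : T.card = V.card := by
    apply Finset.card_nbij' (fun p : F × F => (p.1 + p.2, p.1 - p.2))
      (fun p : F × F => ((p.1 + p.2) / 2, (p.1 - p.2) / 2))
    · rintro ⟨x, y⟩ hp
      simp only [hT, mem_coe, mem_filter, mem_univ, true_and] at hp
      obtain ⟨hx, hy, hxy⟩ := hp
      simp only [hVdef, hWdef, mem_coe, mem_filter, mem_univ, true_and]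
      refine ⟨by linear_combination hxy, ?_, ?_⟩
      · intro h
        apply hy
        have h' : 2 * y = 0 := by linear_combination h
        rcases mul_eq_zero.mp h' with h'' | h''
        · exact absurd h'' h2
        · exact h''
      · intro h
        apply hx
        have h' : 2 * x = 0 := by linear_combination h
        rcases mul_eq_zero.mp h' with h'' | h''
        · exact absurd h'' h2
        · exact h''
    · rintro ⟨u, v⟩ hp
      simp only [hVdef, hWdef, mem_coe, mem_filter, mem_univ, true_and] at hp
      obtain ⟨huv, hne1, hne2⟩ := hp
      simp only [hT, mem_coe, mem_filter, mem_univ, true_and]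
      refine ⟨?_, ?_, ?_⟩
      · intro h
        rw [div_eq_iff h2, zero_mul] at h
        exact hne2 (by linear_combination h)
      · intro h
        rw [div_eq_iff h2, zero_mul] at h
        exact hne1 (by linear_combination h)
      · field_simp
        ring_nf
        linear_combination (4 : F) * huv
    · rintro ⟨x, y⟩ _
      simp only [Prod.mk.injEq]
      constructor <;> field_simp <;> ring
    · rintro ⟨u, v⟩ _
      simp only [Prod.mk.injEq]
      constructor <;> field_simp <;> ring
  -- W.card = 4m - 2
  have hW : W.card = 4 * m - 1 - 1 := by
    have : W.card = (Finset.univ.filter fun u : F => u ≠ 0).card := by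
      apply Finset.card_nbij' (fun p : F × F => p.1) (fun u : F => (u, g / u))
      · rintro ⟨u, v⟩ hp
        simp only [hWdef, mem_coe, mem_filter, mem_univ, true_and] at hp
        simp only [mem_coe, mem_filter, mem_univ, true_and]
        intro h; rw [h, zero_mul] at hp; exact hg hp.symm
      · intro u hu
        simp only [mem_coe, mem_filter, mem_univ, true_and] at hu
        simp only [hWdef, mem_coe, mem_filter, mem_univ, true_and]
        field_simp
      · rintro ⟨u, v⟩ hp
        simp only [hWdef, mem_coe, mem_filter, mem_univ, true_and] at hp
        have hu : u ≠ 0 := by intro h; rw [h, zero_mul] at hp; exact hg hp.symm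
        have hv : g / u = v := by
          field_simp
          linear_combination -hp
        exact Prod.ext rfl hv
      · intro u _; rfl
    rw [this, Finset.filter_ne', Finset.card_erase_of_mem (mem_univ 0), Finset.card_univ, hq]
  -- bad points count
  have hbad : (W.filter fun p : F × F => ¬(p.1 ≠ p.2 ∧ p.1 ≠ -p.2)).card = 2 := by
    have hsplit : (W.filter fun p : F × F => ¬(p.1 ≠ p.2 ∧ p.1 ≠ -p.2))
        = ((Finset.univ.filter fun u : F => u ^ 2 = g).image fun u => (u, u))
          ∪ ((Finset.univ.filter fun u : F => u ^ 2 = -g).image fun u => (u, -u)) := by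
      ext ⟨u, v⟩
      simp only [hWdef, mem_filter, mem_univ, true_and, mem_union, mem_image, mem_filter,
        mem_univ, true_and, not_and_or, not_not, Prod.mk.injEq]
      constructor
      · rintro ⟨huv, h | h⟩
        · subst h
          exact Or.inl ⟨u, by rw [sq]; exact huv, rfl, rfl⟩
        · have hv : v = -u := by linear_combination h
          subst hv
          exact Or.inr ⟨u, by linear_combination -huv, rfl, rfl⟩
      · rintro (⟨w, hw, rfl, rfl⟩ | ⟨w, hw, rfl, rfl⟩)
        · exact ⟨by rw [← sq]; exact hw, Or.inl rfl⟩
        · exact ⟨by linear_combination -hw, Or.inr (by ring)⟩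
    have hinj1 : Function.Injective (fun u : F => (u, u)) := fun a b h =>
      congrArg Prod.fst h
    have hinj2 : Function.Injective (fun u : F => (u, -u)) := fun a b h =>
      congrArg Prod.fst h
    rw [hsplit, Finset.card_union_of_disjoint, Finset.card_image_of_injective _ hinj1,
      Finset.card_image_of_injective _ hinj2]
    · -- exactly one of g, -g is a square
      by_cases hsq : IsSquare g
      · obtain ⟨w, rfl⟩ := hsq
        have hw : w ≠ 0 := by intro h; apply hg; rw [h, mul_zero]
        have h1 : (Finset.univ.filter fun u : F => u ^ 2 = w * w).card = 2 := by
          have he : (Finset.univ.filter fun u : F => u ^ 2 = w * w)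
              = Finset.univ.filter fun u : F => u ^ 2 = w ^ 2 := by
            apply Finset.filter_congr
            intro u _
            rw [← pow_two w]
          rw [he]; exact roots_sq_card h2 hw
        have hnsq : ¬ IsSquare (-(w * w)) := by
          intro ⟨t, ht⟩
          apply hns
          refine ⟨t / w, ?_⟩
          field_simp
          linear_combination ht
        have h0 : (Finset.univ.filter fun u : F => u ^ 2 = -(w * w)).card = 0 :=
          roots_nonsq hnsq
        omega
      · have hχg : quadraticChar F g = -1 := quadraticChar_neg_one_iff_not_isSquare.mpr hsq
        have hχn : quadraticChar F (-1) = -1 := quadraticChar_neg_one_iff_not_isSquare.mpr hns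
        have hχ : quadraticChar F (-g) = 1 := by
          rw [show -g = -1 * g by ring, map_mul, hχg, hχn]; ring
        have hsq' : IsSquare (-g) :=
          (quadraticChar_one_iff_isSquare (neg_ne_zero.mpr hg)).mp hχ
        obtain ⟨w, hw⟩ := hsq'
        have hwne : w ≠ 0 := by
          intro h; rw [h, mul_zero] at hw; exact hg (by linear_combination -hw)
        have h1 : (Finset.univ.filter fun u : F => u ^ 2 = -g).card = 2 := by
          have he : (Finset.univ.filter fun u : F => u ^ 2 = -g)
              = Finset.univ.filter fun u : F => u ^ 2 = w ^ 2 := by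
            apply Finset.filter_congr
            intro u _
            rw [hw, ← pow_two w]
          rw [he]; exact roots_sq_card h2 hwne
        have h0 : (Finset.univ.filter fun u : F => u ^ 2 = g).card = 0 := roots_nonsq hsq
        omega
    · rw [Finset.disjoint_left]
      rintro ⟨u, v⟩ h1' h2'
      simp only [mem_image, mem_filter, mem_univ, true_and, Prod.mk.injEq] at h1' h2'
      obtain ⟨w, hw, rfl, rfl⟩ := h1'
      obtain ⟨w', hw', h3, h4⟩ := h2'
      have hw0 : w = 0 := by
        have h5 : 2 * w = 0 := by linear_combination -h3 - h4
        rcases mul_eq_zero.mp h5 with h' | h'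
        · exact absurd h' h2
        · exact h'
      apply hg
      rw [← hw, hw0]
      norm_num
  -- V.card
  have hVcard : V.card + 2 = 4 * m - 1 - 1 := by
    have h := Finset.card_filter_add_card_filter_not
      (s := W) (fun p : F × F => p.1 ≠ p.2 ∧ p.1 ≠ -p.2)
    rw [hbad] at h
    rw [← hW]
    exact h
  omega
end

section
/- Let s ≥ 1, r ≥ 2, and let L₁, …, L_{r−2} be mutually orthogonal Latin squares of order s on the symbol set {1, …, s}. On the point set Ω = {1,…,s} × {1,…,s} of size s², consider the r·s blocks: the s rows R_i = {(i, j) : 1 ≤ j ≤ s}, the s columns C_j = {(i, j) : 1 ≤ i ≤ s}, and for each t ∈ {1,…,r−2} and each z ∈ {1,…,s} the level set S_{t,z} = {(i,j) : L_t(i,j) = z}. Then every block has cardinality s; the rows form a parallel class, the columns form a parallel class, and for each fixed t the level sets {S_{t,z} : z} form a parallel class, so every point lies in exactly r blocks; and any two blocks belonging to different parallel classes intersect in exactly one point. Hence this family is a resolvable fractional repetition code with θ = s², n = rs, α = s, ρ = r and β = 1. -/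
/-- From `r − 2` mutually orthogonal Latin squares of order `s` one obtains, on
the point set `[s] × [s]`, the `r·s` blocks given by the `s` rows, the `s`
columns, and the level sets of each Latin square.  Every block has `s` points;
the rows, the columns, and the level sets of each fixed Latin square each form a
parallel class (so every point lies in exactly `r` blocks); and any two blocks
from different parallel classes meet in exactly one point.  Hence this family is
a resolvable fractional repetition code with `θ = s²`, `n = rs`, `α = s`,
`ρ = r` and `β = 1`. -/
theorem mols_resolvable_fr_code (s r : ℕ) (hs : 1 ≤ s) (hr : 2 ≤ r)
    (L : Fin (r - 2) → Fin s → Fin s → Fin s)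
    (hLrow : ∀ t i, Function.Bijective (L t i))
    (hLcol : ∀ t j, Function.Bijective (fun i => L t i j))
    (horth : ∀ t₁ t₂, t₁ ≠ t₂ → ∀ x y : Fin s,
      ∃! p : Fin s × Fin s, L t₁ p.1 p.2 = x ∧ L t₂ p.1 p.2 = y)
    (V : (Fin s ⊕ Fin s ⊕ Fin (r - 2) × Fin s) → Finset (Fin s × Fin s))
    (hVrow : ∀ i : Fin s, V (Sum.inl i) =
      Finset.univ.filter fun p : Fin s × Fin s => p.1 = i)
    (hVcol : ∀ j : Fin s, V (Sum.inr (Sum.inl j)) =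
      Finset.univ.filter fun p : Fin s × Fin s => p.2 = j)
    (hVlat : ∀ (t : Fin (r - 2)) (z : Fin s), V (Sum.inr (Sum.inr (t, z))) =
      Finset.univ.filter fun p : Fin s × Fin s => L t p.1 p.2 = z)
    (cls : (Fin s ⊕ Fin s ⊕ Fin (r - 2) × Fin s) → (Unit ⊕ Unit ⊕ Fin (r - 2)))
    (hcls : cls = Sum.elim (fun _ => Sum.inl ())
      (Sum.elim (fun _ => Sum.inr (Sum.inl ())) (fun tz => Sum.inr (Sum.inr tz.1)))) :
    (∀ b, (V b).card = s) ∧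
    (∀ c, (∀ b₁ b₂, cls b₁ = c → cls b₂ = c → b₁ ≠ b₂ → Disjoint (V b₁) (V b₂)) ∧
      (∀ p : Fin s × Fin s, ∃ b, cls b = c ∧ p ∈ V b)) ∧
    (∀ p : Fin s × Fin s, (Finset.univ.filter fun b => p ∈ V b).card = r) ∧
    (∀ b₁ b₂, cls b₁ ≠ cls b₂ → (V b₁ ∩ V b₂).card = 1) ∧
    Fintype.card (Fin s × Fin s) = s ^ 2 ∧
    Fintype.card (Fin s ⊕ Fin s ⊕ Fin (r - 2) × Fin s) = r * s := by
  subst hcls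
  -- unique solution in each row / column of each Latin square
  have hrowEU : ∀ t i z, ∃! j, L t i j = z := fun t i => (hLrow t i).existsUnique
  have hcolEU : ∀ t j z, ∃! i, L t i j = z := fun t j => (hLcol t j).existsUnique
  choose J hJ hJu using hrowEU
  choose I hI hIu using hcolEU
  refine ⟨?_, ?_, ?_, ?_, ?_, ?_⟩
  · -- every block has s points
    rintro (i | j | ⟨t, z⟩)
    · rw [hVrow]
      have h : (Finset.univ.filter fun p : Fin s × Fin s => p.1 = i)
          = Finset.univ.image (fun j : Fin s => (i, j)) := by
        ext p
        simp only [Finset.mem_filter, Finset.mem_image, Finset.mem_univ, true_and,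
          Prod.ext_iff]
        constructor
        · intro h; exact ⟨p.2, h.symm, rfl⟩
        · rintro ⟨j, h1, h2⟩; exact h1.symm
      rw [h, Finset.card_image_of_injective _ (fun a b h => by simpa using h)]
      simp
    · rw [hVcol]
      have h : (Finset.univ.filter fun p : Fin s × Fin s => p.2 = j)
          = Finset.univ.image (fun i : Fin s => (i, j)) := by
        ext p
        simp only [Finset.mem_filter, Finset.mem_image, Finset.mem_univ, true_and,
          Prod.ext_iff]
        constructor
        · intro h; exact ⟨p.1, rfl, h.symm⟩
        · rintro ⟨i, h1, h2⟩; exact h2.symm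
      rw [h, Finset.card_image_of_injective _ (fun a b h => by simpa using h)]
      simp
    · rw [hVlat]
      have h : (Finset.univ.filter fun p : Fin s × Fin s => L t p.1 p.2 = z)
          = Finset.univ.image (fun i : Fin s => (i, J t i z)) := by
        ext p
        simp only [Finset.mem_filter, Finset.mem_image, Finset.mem_univ, true_and,
          Prod.ext_iff]
        constructor
        · intro h; exact ⟨p.1, rfl, (hJu t p.1 z p.2 h).symm⟩
        · rintro ⟨i, h1, h2⟩; rw [← h1, ← h2]; exact hJ t i z
      rw [h, Finset.card_image_of_injective _ (fun a b h => by
        simpa using congrArg Prod.fst h)]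
      simp
  · -- parallel classes
    intro c
    constructor
    · rintro (i₁ | j₁ | ⟨t₁, z₁⟩) (i₂ | j₂ | ⟨t₂, z₂⟩) h₁ h₂ hne <;>
        simp only [Sum.elim_inl, Sum.elim_inr] at h₁ h₂ <;> subst h₁
      · rw [Finset.disjoint_left]
        intro p hp₁ hp₂
        rw [hVrow i₁] at hp₁
        rw [hVrow i₂] at hp₂
        simp only [Finset.mem_filter] at hp₁ hp₂
        exact hne (congrArg Sum.inl (hp₁.2 ▸ hp₂.2))
      · exact absurd h₂ (by simp)
      · exact absurd h₂ (by simp)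
      · exact absurd h₂ (by simp)
      · rw [Finset.disjoint_left]
        intro p hp₁ hp₂
        rw [hVcol j₁] at hp₁
        rw [hVcol j₂] at hp₂
        simp only [Finset.mem_filter] at hp₁ hp₂
        exact hne (congrArg (fun j => Sum.inr (Sum.inl j)) (hp₁.2 ▸ hp₂.2))
      · exact absurd h₂ (by simp)
      · exact absurd h₂ (by simp)
      · exact absurd h₂ (by simp)
      · have ht : t₂ = t₁ := Sum.inr_injective (Sum.inr_injective h₂)
        subst ht
        rw [Finset.disjoint_left]
        intro p hp₁ hp₂
        rw [hVlat t₂ z₁] at hp₁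
        rw [hVlat t₂ z₂] at hp₂
        simp only [Finset.mem_filter] at hp₁ hp₂
        exact hne (congrArg (fun z => Sum.inr (Sum.inr (t₂, z))) (hp₁.2 ▸ hp₂.2))
    · intro p
      rcases c with _ | _ | t
      · exact ⟨Sum.inl p.1, rfl, by rw [hVrow]; simp⟩
      · exact ⟨Sum.inr (Sum.inl p.2), rfl, by rw [hVcol]; simp⟩
      · exact ⟨Sum.inr (Sum.inr (t, L t p.1 p.2)), rfl, by rw [hVlat]; simp⟩
  · -- each point lies in exactly r blocks
    intro p
    set F : (Unit ⊕ Unit ⊕ Fin (r - 2)) → (Fin s ⊕ Fin s ⊕ Fin (r - 2) × Fin s) :=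
      Sum.elim (fun _ => Sum.inl p.1)
        (Sum.elim (fun _ => Sum.inr (Sum.inl p.2))
          (fun t => Sum.inr (Sum.inr (t, L t p.1 p.2)))) with hF
    have hFinj : Function.Injective F := by
      have key : ∀ a b : Unit ⊕ Unit ⊕ Fin (r - 2), F a = F b → a = b := by
        rintro (a | a | a) (b | b | b) h <;>
          simp only [hF, Sum.elim_inl, Sum.elim_inr] at h
        · rfl
        · exact absurd h (by simp)
        · exact absurd h (by simp)
        · exact absurd h (by simp)
        · rfl
        · exact absurd h (by simp)
        · exact absurd h (by simp)
        · exact absurd h (by simp)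
        · exact congrArg (fun t => Sum.inr (Sum.inr t) : Fin (r-2) → _)
            (congrArg Prod.fst (Sum.inr_injective (Sum.inr_injective h)))
      exact key
    have h : (Finset.univ.filter fun b => p ∈ V b) = Finset.univ.image F := by
      ext b
      simp only [Finset.mem_filter, Finset.mem_image, Finset.mem_univ, true_and]
      rcases b with i | j | ⟨t, z⟩
      · rw [hVrow]
        simp only [Finset.mem_filter, Finset.mem_univ, true_and]
        constructor
        · intro h; exact ⟨Sum.inl (), by simp [hF, h]⟩
        · rintro ⟨(a | a | a), ha⟩ <;> simp [hF] at ha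
          exact ha
      · rw [hVcol]
        simp only [Finset.mem_filter, Finset.mem_univ, true_and]
        constructor
        · intro h; exact ⟨Sum.inr (Sum.inl ()), by simp [hF, h]⟩
        · rintro ⟨(a | a | a), ha⟩ <;> simp [hF] at ha
          exact ha
      · rw [hVlat]
        simp only [Finset.mem_filter, Finset.mem_univ, true_and]
        constructor
        · intro h; exact ⟨Sum.inr (Sum.inr t), by simp [hF, h]⟩
        · rintro ⟨(a | a | a), ha⟩ <;> simp [hF] at ha
          obtain ⟨h1, h2⟩ := ha
          subst h1
          exact h2
    rw [h, Finset.card_image_of_injective _ hFinj, Finset.card_univ]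
    simp only [Fintype.card_sum, Fintype.card_unit, Fintype.card_fin]
    omega
  · -- blocks from different classes meet in exactly one point
    rintro (i₁ | j₁ | ⟨t₁, z₁⟩) (i₂ | j₂ | ⟨t₂, z₂⟩) hne <;>
      simp only [Sum.elim_inl, Sum.elim_inr] at hne <;>
      first
        | (exact absurd rfl hne)
        | skip
    · -- row ∩ column
      rw [hVrow, hVcol, Finset.card_eq_one]
      refine ⟨(i₁, j₂), ?_⟩
      ext p
      simp [Finset.mem_inter, Prod.ext_iff]
    · -- row ∩ latin square
      rw [hVrow, hVlat, Finset.card_eq_one]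
      refine ⟨(i₁, J t₂ i₁ z₂), ?_⟩
      ext p
      simp only [Finset.mem_inter, Finset.mem_filter, Finset.mem_univ, true_and,
        Finset.mem_singleton, Prod.ext_iff]
      constructor
      · rintro ⟨h1, h2⟩; exact ⟨h1, hJu t₂ i₁ z₂ p.2 (h1 ▸ h2)⟩
      · rintro ⟨h1, h2⟩; exact ⟨h1, by rw [h1, h2]; exact hJ t₂ i₁ z₂⟩
    · -- column ∩ row
      rw [hVrow, hVcol, Finset.card_eq_one]
      refine ⟨(i₂, j₁), ?_⟩
      ext p
      simp [Finset.mem_inter, Prod.ext_iff, and_comm]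
    · -- column ∩ latin square
      rw [hVcol, hVlat, Finset.card_eq_one]
      refine ⟨(I t₂ j₁ z₂, j₁), ?_⟩
      ext p
      simp only [Finset.mem_inter, Finset.mem_filter, Finset.mem_univ, true_and,
        Finset.mem_singleton, Prod.ext_iff]
      constructor
      · rintro ⟨h1, h2⟩; exact ⟨hIu t₂ j₁ z₂ p.1 (h1 ▸ h2), h1⟩
      · rintro ⟨h1, h2⟩; exact ⟨h2, by rw [h1, h2]; exact hI t₂ j₁ z₂⟩
    · -- latin square ∩ row
      rw [hVrow, hVlat, Finset.card_eq_one]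
      refine ⟨(i₂, J t₁ i₂ z₁), ?_⟩
      ext p
      simp only [Finset.mem_inter, Finset.mem_filter, Finset.mem_univ, true_and,
        Finset.mem_singleton, Prod.ext_iff]
      constructor
      · rintro ⟨h2, h1⟩; exact ⟨h1, hJu t₁ i₂ z₁ p.2 (h1 ▸ h2)⟩
      · rintro ⟨h1, h2⟩; exact ⟨by rw [h1, h2]; exact hJ t₁ i₂ z₁, h1⟩
    · -- latin square ∩ column
      rw [hVcol, hVlat, Finset.card_eq_one]
      refine ⟨(I t₁ j₂ z₁, j₂), ?_⟩
      ext p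
      simp only [Finset.mem_inter, Finset.mem_filter, Finset.mem_univ, true_and,
        Finset.mem_singleton, Prod.ext_iff]
      constructor
      · rintro ⟨h2, h1⟩; exact ⟨hIu t₁ j₂ z₁ p.1 (h1 ▸ h2), h1⟩
      · rintro ⟨h1, h2⟩; exact ⟨by rw [h1, h2]; exact hI t₁ j₂ z₁, h2⟩
    · -- two different latin squares
      have ht : t₁ ≠ t₂ := fun h => hne (by rw [h])
      obtain ⟨p₀, hp₀, hu⟩ := horth t₁ t₂ ht z₁ z₂
      rw [hVlat, hVlat, Finset.card_eq_one]
      refine ⟨p₀, ?_⟩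
      ext p
      simp only [Finset.mem_inter, Finset.mem_filter, Finset.mem_univ, true_and,
        Finset.mem_singleton]
      constructor
      · intro h; exact hu p h
      · intro h; rw [h]; exact hp₀
  · simp [sq]
  · simp only [Fintype.card_sum, Fintype.card_prod, Fintype.card_fin]
    obtain ⟨r', rfl⟩ : ∃ r', r = r' + 2 := ⟨r - 2, by omega⟩
    simp
    ring
end
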